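/- Let μ < 0. Then the series F(a) := Σ_{n=1}^∞ (-1)^{n+1} · exp((a + 1/2)·log n) · K_{3/2 - a}(n·|μ|) converges for every a ∈ ℂ and defines an entire (analytic on all of ℂ) function of a. -/

import Mathlib

open MeasureTheory Real Set

/-- Modified Bessel function of the second kind, with complex order. -/
noncomputable def besselKC (ν : ℂ) (z : ℝ) : ℂ :=
  ∫ t in Ioi (0:ℝ), (Real.exp (-z * Real.cosh t) : ℂ) * Complex.cosh (ν * (t : ℂ))


lemma myNormCoshLe (w : ℂ) : ‖Complex.cosh w‖ ≤ Real.exp ‖w‖ := by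
  have h1 : ‖Complex.exp w‖ ≤ Real.exp ‖w‖ := by
    rw [Complex.norm_exp]
    exact Real.exp_le_exp.2 (Complex.re_le_norm w)
  have h2 : ‖Complex.exp (-w)‖ ≤ Real.exp ‖w‖ := by
    rw [Complex.norm_exp]
    refine Real.exp_le_exp.2 ?_
    simpa using (Complex.re_le_norm (-w)).trans (by simp)
  calc ‖Complex.cosh w‖ = ‖Complex.exp w + Complex.exp (-w)‖ / 2 := by
        rw [Complex.cosh]; simp [norm_div]
    _ ≤ (Real.exp ‖w‖ + Real.exp ‖w‖) / 2 := by
        gcongr; exact (norm_add_le _ _).trans (by linarith)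
    _ = Real.exp ‖w‖ := by ring

lemma myNormSinhLe (w : ℂ) : ‖Complex.sinh w‖ ≤ Real.exp ‖w‖ := by
  have h1 : ‖Complex.exp w‖ ≤ Real.exp ‖w‖ := by
    rw [Complex.norm_exp]
    exact Real.exp_le_exp.2 (Complex.re_le_norm w)
  have h2 : ‖Complex.exp (-w)‖ ≤ Real.exp ‖w‖ := by
    rw [Complex.norm_exp]
    refine Real.exp_le_exp.2 ?_
    simpa using (Complex.re_le_norm (-w)).trans (by simp)
  calc ‖Complex.sinh w‖ = ‖Complex.exp w - Complex.exp (-w)‖ / 2 := by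
        rw [Complex.sinh]; simp [norm_div]
    _ ≤ (Real.exp ‖w‖ + Real.exp ‖w‖) / 2 := by
        gcongr; exact (norm_sub_le _ _).trans (by linarith)
    _ = Real.exp ‖w‖ := by ring

lemma myCoshGe (t : ℝ) (ht : 0 ≤ t) : t ^ 2 / 8 ≤ Real.cosh t := by
  have h1 : 1 + t / 2 ≤ Real.exp (t / 2) := by linarith [Real.add_one_le_exp (t / 2)]
  have h2 : Real.exp (t / 2) * Real.exp (t / 2) = Real.exp t := by
    rw [← Real.exp_add]; ring_nf
  have h3 : (0:ℝ) < Real.exp (-t) := Real.exp_pos _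
  rw [Real.cosh_eq]
  nlinarith [Real.exp_pos (t / 2)]

lemma myKey (z R t : ℝ) (hz : 0 < z) (ht : 0 ≤ t) :
    R * t - z * Real.cosh t ≤ 2 * (R + 1) ^ 2 / z - t := by
  have h4 := myCoshGe t ht
  have h5 : z ^ 2 * (t ^ 2 / 8) ≤ z ^ 2 * Real.cosh t := by
    apply mul_le_mul_of_nonneg_left h4 (sq_nonneg z)
  have num : 0 ≤ 2 * (R + 1) ^ 2 + z ^ 2 * Real.cosh t - t * z - R * t * z := by
    nlinarith [sq_nonneg (z * t - 4 * (R + 1))]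
  have e : 2 * (R + 1) ^ 2 / z - t - (R * t - z * Real.cosh t)
      = (2 * (R + 1) ^ 2 + z ^ 2 * Real.cosh t - t * z - R * t * z) / z := by
    field_simp; ring
  have := div_nonneg num hz.le
  linarith [e ▸ this]

lemma myIntegrable (z R : ℝ) (hz : 0 < z) :
    IntegrableOn (fun t => Real.exp (R * t - z * Real.cosh t)) (Ioi 0) := by
  have hcont : Continuous fun t : ℝ => Real.exp (R * t - z * Real.cosh t) := by fun_prop
  refine Integrable.mono'
    (g := fun t => Real.exp (2 * (R + 1) ^ 2 / z) * Real.exp (-1 * t)) ?_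
    hcont.aestronglyMeasurable ?_
  · exact (exp_neg_integrableOn_Ioi 0 one_pos).const_mul _
  · filter_upwards [self_mem_ae_restrict measurableSet_Ioi] with t ht
    rw [Real.norm_eq_abs, abs_of_pos (Real.exp_pos _), ← Real.exp_add]
    exact Real.exp_le_exp.2 (by linarith [myKey z R t hz (le_of_lt ht)])

lemma besselKC_diff (z : ℝ) (hz : 0 < z) : Differentiable ℂ fun ν => besselKC ν z := by
  intro ν₀
  set R : ℝ := ‖ν₀‖ + 1 with hR
  have hmeas : ∀ ν : ℂ, AEStronglyMeasurable
      (fun t : ℝ => (Real.exp (-z * Real.cosh t) : ℂ) * Complex.cosh (ν * (t : ℂ)))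
      (volume.restrict (Ioi 0)) := by
    intro ν
    exact Continuous.aestronglyMeasurable (by fun_prop)
  have key := hasDerivAt_integral_of_dominated_loc_of_deriv_le
    (F := fun (ν : ℂ) (t : ℝ) => (Real.exp (-z * Real.cosh t) : ℂ) * Complex.cosh (ν * (t : ℂ)))
    (F' := fun (ν : ℂ) (t : ℝ) =>
      (Real.exp (-z * Real.cosh t) : ℂ) * (Complex.sinh (ν * (t : ℂ)) * (t : ℂ)))
    (x₀ := ν₀) (s := Metric.ball ν₀ 1)
    (bound := fun t => Real.exp ((R + 1) * t - z * Real.cosh t))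
    (μ := volume.restrict (Ioi 0))
    (Metric.ball_mem_nhds ν₀ one_pos) (Filter.Eventually.of_forall hmeas) ?_ ?_ ?_ ?_ ?_
  · exact key.2.differentiableAt
  · -- integrability of F ν₀
    refine Integrable.mono' (myIntegrable z ‖ν₀‖ hz) (hmeas ν₀) ?_
    filter_upwards [self_mem_ae_restrict measurableSet_Ioi] with t ht
    have ht' : (0:ℝ) ≤ t := le_of_lt ht
    rw [norm_mul, Complex.norm_real, Real.norm_eq_abs, abs_of_pos (Real.exp_pos _)]
    calc Real.exp (-z * Real.cosh t) * ‖Complex.cosh (ν₀ * (t:ℂ))‖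
        ≤ Real.exp (-z * Real.cosh t) * Real.exp ‖ν₀ * (t:ℂ)‖ := by
          gcongr; exact myNormCoshLe _
      _ ≤ Real.exp (‖ν₀‖ * t - z * Real.cosh t) := by
          rw [← Real.exp_add]
          apply Real.exp_le_exp.2
          have : ‖ν₀ * (t:ℂ)‖ = ‖ν₀‖ * t := by
            rw [norm_mul, Complex.norm_real, Real.norm_eq_abs, abs_of_nonneg ht']
          rw [this]; ring_nf; exact le_rfl
  · exact Continuous.aestronglyMeasurable (by fun_prop)
  · -- bound for F'
    filter_upwards [self_mem_ae_restrict measurableSet_Ioi] with t ht ν hν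
    have ht' : (0:ℝ) ≤ t := le_of_lt ht
    have hνR : ‖ν‖ ≤ R := by
      have := mem_ball_iff_norm.1 hν
      calc ‖ν‖ ≤ ‖ν - ν₀‖ + ‖ν₀‖ := by simpa using norm_add_le (ν - ν₀) ν₀
        _ ≤ R := by rw [hR]; linarith
    have hnt : ‖ν * (t:ℂ)‖ = ‖ν‖ * t := by
      rw [norm_mul, Complex.norm_real, Real.norm_eq_abs, abs_of_nonneg ht']
    rw [norm_mul, norm_mul, Complex.norm_real, Real.norm_eq_abs,
      abs_of_pos (Real.exp_pos _), Complex.norm_real, Real.norm_eq_abs, abs_of_nonneg ht']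
    calc Real.exp (-z * Real.cosh t) * (‖Complex.sinh (ν * (t:ℂ))‖ * t)
        ≤ Real.exp (-z * Real.cosh t) * (Real.exp (‖ν‖ * t) * Real.exp t) := by
          gcongr
          · exact (myNormSinhLe _).trans_eq (by rw [hnt])
          · linarith [Real.add_one_le_exp t]
      _ ≤ Real.exp ((R + 1) * t - z * Real.cosh t) := by
          rw [← Real.exp_add, ← Real.exp_add]
          apply Real.exp_le_exp.2
          have : ‖ν‖ * t ≤ R * t := mul_le_mul_of_nonneg_right hνR ht'
          linarith
  · exact myIntegrable z (R + 1) hz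
  · -- differentiability
    filter_upwards [self_mem_ae_restrict measurableSet_Ioi] with t _ ν _
    have h1 : HasDerivAt (fun ν : ℂ => Complex.cosh (ν * (t:ℂ)))
        (Complex.sinh (ν * (t:ℂ)) * (t:ℂ)) ν := by
      have := (Complex.hasDerivAt_cosh (ν * (t:ℂ))).comp ν
        ((hasDerivAt_id ν).mul_const (t:ℂ))
      simpa [Function.comp_def] using this
    simpa using h1.const_mul ((Real.exp (-z * Real.cosh t) : ℂ))

lemma besselKC_norm_le (c R z : ℝ) (hc : 0 < c) (ν : ℂ) (hν : ‖ν‖ ≤ R) (hzc : c ≤ z) :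
    ‖besselKC ν z‖ ≤
      Real.exp (c / 2 - z) * ∫ t in Ioi (0:ℝ), Real.exp (R * t - c / 2 * Real.cosh t) := by
  have hc2 : (0:ℝ) < c / 2 := by linarith
  have hint := (myIntegrable (c / 2) R hc2).const_mul (Real.exp (c / 2 - z))
  rw [besselKC]
  calc ‖∫ t in Ioi (0:ℝ), (Real.exp (-z * Real.cosh t) : ℂ) * Complex.cosh (ν * (t:ℂ))‖
      ≤ ∫ t in Ioi (0:ℝ), Real.exp (c / 2 - z) * Real.exp (R * t - c / 2 * Real.cosh t) := by
        refine norm_integral_le_of_norm_le hint ?_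
        filter_upwards [self_mem_ae_restrict measurableSet_Ioi] with t ht
        have ht' : (0:ℝ) ≤ t := le_of_lt ht
        have h1 : ‖ν * (t:ℂ)‖ = ‖ν‖ * t := by
          rw [norm_mul, Complex.norm_real, Real.norm_eq_abs, abs_of_nonneg ht']
        rw [norm_mul, Complex.norm_real, Real.norm_eq_abs, abs_of_pos (Real.exp_pos _)]
        calc Real.exp (-z * Real.cosh t) * ‖Complex.cosh (ν * (t:ℂ))‖
            ≤ Real.exp (-z * Real.cosh t) * Real.exp (‖ν‖ * t) := by
              gcongr; exact (myNormCoshLe _).trans_eq (by rw [h1])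
          _ ≤ Real.exp (c / 2 - z) * Real.exp (R * t - c / 2 * Real.cosh t) := by
              rw [← Real.exp_add, ← Real.exp_add]
              apply Real.exp_le_exp.2
              have hcosh : (1:ℝ) ≤ Real.cosh t := Real.one_le_cosh t
              have h2 : ‖ν‖ * t ≤ R * t := mul_le_mul_of_nonneg_right hν ht'
              nlinarith [mul_le_mul_of_nonneg_left hcosh (by linarith : (0:ℝ) ≤ z - c / 2)]
    _ = Real.exp (c / 2 - z) * ∫ t in Ioi (0:ℝ), Real.exp (R * t - c / 2 * Real.cosh t) := by
        rw [integral_const_mul]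

lemma myAux (c ρ : ℝ) (hc : 0 < c) (hρ : 0 < ρ) :
    ∃ u : ℕ → ℝ, Summable u ∧ ∀ (n : ℕ), ∀ a ∈ Metric.ball (0:ℂ) ρ,
      ‖(-1 : ℂ) ^ n * Complex.exp ((a + 1/2) * (Real.log ((n : ℝ) + 1) : ℂ)) *
        besselKC (3/2 - a) (((n : ℝ) + 1) * c)‖ ≤ u n := by
  set C : ℝ := ∫ t in Ioi (0:ℝ), Real.exp ((ρ + 2) * t - c / 2 * Real.cosh t) with hCdef
  have hC : 0 ≤ C := setIntegral_nonneg measurableSet_Ioi fun t _ => (Real.exp_pos _).le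
  refine ⟨fun n => Real.exp ((ρ + 1/2) * Real.log ((n:ℝ) + 1)) *
      (Real.exp (c / 2 - ((n:ℝ) + 1) * c) * C), ?_, ?_⟩
  · -- summability
    set k : ℕ := ⌈ρ + 1/2⌉₊ with hkdef
    have hk : ρ + 1/2 ≤ (k:ℝ) := Nat.le_ceil _
    have hr : ‖Real.exp (-c)‖ < 1 := by
      rw [Real.norm_eq_abs, abs_of_pos (Real.exp_pos _)]
      exact Real.exp_lt_one_iff.2 (by linarith)
    have h0 : Summable (fun n : ℕ => (n:ℝ) ^ k * Real.exp (-c) ^ n) :=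
      summable_pow_mul_geometric_of_norm_lt_one k hr
    have h1 : Summable (fun n : ℕ => ((n:ℝ) + 1) ^ k * Real.exp (-c) ^ (n + 1)) := by
      have := (summable_nat_add_iff (f := fun n : ℕ => (n:ℝ) ^ k * Real.exp (-c) ^ n) 1).2 h0
      refine this.congr fun n => ?_
      push_cast; ring
    refine Summable.of_nonneg_of_le (fun n => by positivity)
      (fun n => ?_) ((h1.mul_left (Real.exp (c / 2) * C)))
    have hlog : (0:ℝ) ≤ Real.log ((n:ℝ) + 1) := Real.log_nonneg (by push_cast; linarith [Nat.cast_nonneg (α := ℝ) n])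
    have hn1 : (1:ℝ) ≤ (n:ℝ) + 1 := by linarith [Nat.cast_nonneg (α := ℝ) n]
    have e1 : Real.exp ((ρ + 1/2) * Real.log ((n:ℝ) + 1)) ≤ ((n:ℝ) + 1) ^ k := by
      calc Real.exp ((ρ + 1/2) * Real.log ((n:ℝ) + 1))
          ≤ Real.exp ((k:ℝ) * Real.log ((n:ℝ) + 1)) := by
            exact Real.exp_le_exp.2 (mul_le_mul_of_nonneg_right hk hlog)
        _ = ((n:ℝ) + 1) ^ k := by
            rw [Real.exp_nat_mul, Real.exp_log (by linarith)]
    have e2 : Real.exp (c / 2 - ((n:ℝ) + 1) * c) = Real.exp (c / 2) * Real.exp (-c) ^ (n + 1) := by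
      rw [← Real.exp_nat_mul, ← Real.exp_add]
      push_cast; ring_nf
    calc Real.exp ((ρ + 1/2) * Real.log ((n:ℝ) + 1)) * (Real.exp (c / 2 - ((n:ℝ) + 1) * c) * C)
        ≤ ((n:ℝ) + 1) ^ k * (Real.exp (c / 2 - ((n:ℝ) + 1) * c) * C) := by
          gcongr
      _ = Real.exp (c / 2) * C * (((n:ℝ) + 1) ^ k * Real.exp (-c) ^ (n + 1)) := by
          rw [e2]; ring
  · -- the bound
    intro n a ha
    have haρ : ‖a‖ < ρ := mem_ball_zero_iff.1 ha
    have hn1 : (1:ℝ) ≤ (n:ℝ) + 1 := by linarith [Nat.cast_nonneg (α := ℝ) n]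
    have hlog : (0:ℝ) ≤ Real.log ((n:ℝ) + 1) := Real.log_nonneg hn1
    have hz : c ≤ ((n:ℝ) + 1) * c := le_mul_of_one_le_left hc.le hn1
    have hνR : ‖(3/2 : ℂ) - a‖ ≤ ρ + 2 := by
      calc ‖(3/2 : ℂ) - a‖ ≤ ‖(3/2 : ℂ)‖ + ‖a‖ := norm_sub_le _ _
        _ ≤ ρ + 2 := by
            have : ‖(3/2 : ℂ)‖ = 3/2 := by
              norm_num [Complex.norm_def, Complex.normSq_apply]
            rw [this]; linarith
    have hexp : ‖Complex.exp ((a + 1/2) * (Real.log ((n:ℝ) + 1) : ℂ))‖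
        ≤ Real.exp ((ρ + 1/2) * Real.log ((n:ℝ) + 1)) := by
      rw [Complex.norm_exp]
      apply Real.exp_le_exp.2
      have hre : ((a + 1/2) * ((Real.log ((n:ℝ) + 1) : ℝ) : ℂ)).re
          = (a.re + 1/2) * Real.log ((n:ℝ) + 1) := by
        simp [Complex.mul_re, Complex.add_re]
      rw [hre]
      have : a.re + 1/2 ≤ ρ + 1/2 := by
        have := (Complex.abs_re_le_norm a)
        have h2 : a.re ≤ ‖a‖ := Complex.re_le_norm a
        linarith
      exact mul_le_mul_of_nonneg_right this hlog
    have hbes := besselKC_norm_le c (ρ + 2) (((n:ℝ) + 1) * c) hc ((3/2 : ℂ) - a) hνR hz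
    rw [norm_mul, norm_mul, norm_pow, norm_neg, norm_one, one_pow, one_mul]
    exact mul_le_mul hexp hbes (norm_nonneg _) (Real.exp_pos _).le

theorem stmt6 (μ : ℝ) (hμ : μ < 0) :
    (∀ a : ℂ, Summable (fun n : ℕ =>
      (-1 : ℂ) ^ n * Complex.exp ((a + 1/2) * (Real.log ((n : ℝ) + 1) : ℂ)) *
        besselKC (3/2 - a) (((n : ℝ) + 1) * |μ|))) ∧
    ∀ a : ℂ, AnalyticAt ℂ (fun a : ℂ => ∑' n : ℕ,
      (-1 : ℂ) ^ n * Complex.exp ((a + 1/2) * (Real.log ((n : ℝ) + 1) : ℂ)) *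
        besselKC (3/2 - a) (((n : ℝ) + 1) * |μ|)) a := by
  have hc : (0:ℝ) < |μ| := abs_pos.2 hμ.ne
  constructor
  · intro a
    obtain ⟨u, hu, hb⟩ := myAux |μ| (‖a‖ + 1) hc (by positivity)
    exact Summable.of_norm_bounded hu
      (fun n => hb n a (mem_ball_zero_iff.2 (by linarith)))
  · intro a
    obtain ⟨u, hu, hb⟩ := myAux |μ| (‖a‖ + 1) hc (by positivity)
    have hdiff : ∀ n : ℕ, DifferentiableOn ℂ (fun a : ℂ =>
        (-1 : ℂ) ^ n * Complex.exp ((a + 1/2) * (Real.log ((n : ℝ) + 1) : ℂ)) *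
          besselKC (3/2 - a) (((n : ℝ) + 1) * |μ|)) (Metric.ball (0:ℂ) (‖a‖ + 1)) := by
      intro n
      have hn1 : (0:ℝ) < ((n:ℝ) + 1) * |μ| := by positivity
      have h1 : Differentiable ℂ fun a : ℂ => besselKC (3/2 - a) (((n : ℝ) + 1) * |μ|) :=
        (besselKC_diff _ hn1).comp ((differentiable_const _).sub differentiable_id)
      have h2 : Differentiable ℂ fun a : ℂ =>
          Complex.exp ((a + 1/2) * (Real.log ((n : ℝ) + 1) : ℂ)) :=
        Complex.differentiable_exp.comp
          ((differentiable_id.add (differentiable_const _)).mul_const _)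
      exact (((differentiable_const _).mul h2).mul h1).differentiableOn
    have hd := Complex.differentiableOn_tsum_of_summable_norm hu hdiff Metric.isOpen_ball
      (fun n w hw => hb n w hw)
    exact hd.analyticAt
      (Metric.isOpen_ball.mem_nhds (mem_ball_zero_iff.2 (by linarith)))
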